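/- Let m, r be positive integers with 1 ≤ r < m, and let h, k be integers with 0 ≤ h < k and gcd(h,k) = 1. Suppose λ*_{m,r}(h,k) = 0, i.e. gcd(m,k) divides rh. Then the rational number ς := (r·gcd(m,k) + r·ℏ_m(h,k)·m·h)/(m·k) is not an integer, and moreover |1 − e^{2πi/m}| ≤ |1 − e^{2πiς}| ≤ 2. -/

import Mathlib

open Complex

noncomputable section

/-- `λ_{m,r}(h,k) := ⌈rh/gcd(m,k)⌉` (with the convention `gcd(0,n) = n`). -/
def lamF (m r h k : ℕ) : ℤ := ⌈(r * h : ℚ) / (Nat.gcd m k : ℚ)⌉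

/-- `λ*_{m,r}(h,k) := λ_{m,r}(h,k) − rh/gcd(m,k)`. -/
def lamStar (m r h k : ℕ) : ℚ := (lamF m r h k : ℚ) - (r * h : ℚ) / (Nat.gcd m k : ℚ)

lemma abs_one_sub_exp' (θ : ℝ) :
    ‖1 - Complex.exp ((θ:ℂ) * Complex.I)‖ = Real.sqrt (2 - 2*Real.cos θ) := by
  rw [Complex.norm_def, Complex.normSq_apply]
  simp [Complex.exp_mul_I, Complex.cos_ofReal_re, Complex.sin_ofReal_re]
  congr 1
  nlinarith [Real.sin_sq_add_cos_sq θ]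

lemma cos_bound' (m x : ℝ) (hm : 2 ≤ m) (hx1 : 1/m ≤ x) (hx2 : x ≤ 1 - 1/m) :
    Real.cos (2*Real.pi*x) ≤ Real.cos (2*Real.pi/m) := by
  have hm0 : (0:ℝ) < m := by linarith
  have hpi := Real.pi_pos
  have h1m : 1/m ≤ 1/2 := by
    rw [div_le_div_iff₀ hm0 (by norm_num)]; linarith
  have key : ∀ y : ℝ, 1/m ≤ y → y ≤ 1/2 → Real.cos (2*Real.pi*y) ≤ Real.cos (2*Real.pi/m) := by
    intro y hy1 hy2
    apply Real.cos_le_cos_of_nonneg_of_le_pi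
    · positivity
    · nlinarith
    · rw [div_le_iff₀ hm0] at hy1 ⊢ <;> nlinarith
  rcases le_or_gt x (1/2) with hx | hx
  · exact key x hx1 hx
  · have : Real.cos (2*Real.pi*x) = Real.cos (2*Real.pi*(1-x)) := by
      rw [show 2*Real.pi*(1-x) = 2*Real.pi - 2*Real.pi*x by ring, Real.cos_two_pi_sub]
    rw [this]
    exact key (1-x) (by linarith) (by linarith)

set_option maxHeartbeats 1000000 in
/-- Let `m, r` be positive integers with `1 ≤ r < m`, and let `h, k` be
integers with `0 ≤ h < k` and `gcd(h,k) = 1`. Suppose `λ*_{m,r}(h,k) = 0`, i.e. `gcd(m,k)`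
divides `rh`. Then the rational number `ς := (r·gcd(m,k) + r·ℏ_m(h,k)·m·h)/(m·k)` is not an
integer, and moreover `|1 − e^{2πi/m}| ≤ |1 − e^{2πiς}| ≤ 2`. -/
theorem sigma_not_int_and_abs_bounds (m r h k : ℕ) (hm : 1 ≤ m) (hr : 1 ≤ r) (hrm : r < m)
    (hhk : h < k) (hcop : Nat.gcd h k = 1) (hls : lamStar m r h k = 0) (ℏ : ℤ)
    (hcong : ℏ * (((m / Nat.gcd m k) * h : ℕ) : ℤ) ≡ -1 [ZMOD ((k / Nat.gcd m k : ℕ) : ℤ)])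
    (ς : ℚ)
    (hς : ς = ((r : ℚ) * (Nat.gcd m k : ℚ) + (r : ℚ) * (ℏ : ℚ) * (m : ℚ) * (h : ℚ)) /
      ((m : ℚ) * (k : ℚ))) :
    (¬ ∃ z : ℤ, ς = (z : ℚ)) ∧
      ‖1 - Complex.exp (2 * (Real.pi : ℂ) * Complex.I / (m : ℂ))‖ ≤
        ‖1 - Complex.exp (2 * (Real.pi : ℂ) * Complex.I * (ς : ℂ))‖ ∧
      ‖1 - Complex.exp (2 * (Real.pi : ℂ) * Complex.I * (ς : ℂ))‖ ≤ 2 := by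
  have hk0 : 0 < k := lt_of_le_of_lt (Nat.zero_le h) hhk
  set d := Nat.gcd m k with hdd
  have hd0 : 0 < d := Nat.gcd_pos_of_pos_left k hm
  -- d ∣ r * h
  have hdvdN : d ∣ r * h := by
    have h1 : ((lamF m r h k : ℤ):ℚ) = (r*h:ℚ)/(d:ℚ) := by
      have := sub_eq_zero.mp hls
      simpa [lamStar] using this
    have hdQ : ((d:ℚ)) ≠ 0 := by positivity
    have h2 : ((r*h : ℕ):ℚ) = ((lamF m r h k * d : ℤ):ℚ) := by
      push_cast
      field_simp at h1
      push_cast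
      linarith [h1]
    have h3 : ((r*h : ℕ):ℤ) = lamF m r h k * d := by exact_mod_cast h2
    have : (d:ℤ) ∣ ((r*h : ℕ):ℤ) := ⟨lamF m r h k, by linarith [h3]⟩
    exact_mod_cast this
  have hcophd : Nat.Coprime h d := Nat.Coprime.coprime_dvd_right (Nat.gcd_dvd_right m k) hcop
  have hdr : d ∣ r := (Nat.Coprime.symm hcophd).dvd_of_dvd_mul_right hdvdN
  obtain ⟨u, hu⟩ := hdr
  obtain ⟨m', hm'⟩ : d ∣ m := Nat.gcd_dvd_left m k
  obtain ⟨k', hk'⟩ : d ∣ k := Nat.gcd_dvd_right m k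
  have hu1 : 1 ≤ u := by
    rcases Nat.eq_zero_or_pos u with h0 | h1
    · subst h0; simp at hu; omega
    · exact h1
  have hum : u < m' := by
    have hlt : d * u < d * m' := by rw [← hu, ← hm']; exact hrm
    exact Nat.lt_of_mul_lt_mul_left hlt
  have hmdiv : m / d = m' := by rw [hm']; exact Nat.mul_div_cancel_left m' hd0
  have hkdiv : k / d = k' := by rw [hk']; exact Nat.mul_div_cancel_left k' hd0
  rw [hmdiv, hkdiv] at hcong
  obtain ⟨t0, ht0⟩ := Int.ModEq.dvd hcong
  set t : ℤ := -t0 with htdef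
  have ht : 1 + ℏ * ((m' : ℤ) * h) = (k':ℤ) * t := by
    push_cast at ht0
    rw [htdef]; linarith [ht0]
  have hmz : (m:ℤ) = (d:ℤ) * m' := by exact_mod_cast hm'
  have hkz : (k:ℤ) = (d:ℤ) * k' := by exact_mod_cast hk'
  have hrz : (r:ℤ) = (d:ℤ) * u := by exact_mod_cast hu
  have key : (r:ℤ)*d + r*ℏ*m*h = (r*t)*k := by
    rw [hmz, hkz]; linear_combination (r:ℤ)*(d:ℤ)*ht
  have hmQ : (m:ℚ) ≠ 0 := by positivity
  have hkQ : (k:ℚ) ≠ 0 := by positivity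
  -- value of ς
  have hςv : ς = (((r:ℤ)*t : ℤ):ℚ) / (m:ℚ) := by
    rw [hς, div_eq_div_iff (by positivity) hmQ]
    have keyQ : (r:ℚ)*d + r*ℏ*m*h = ((r:ℤ)*t:ℤ)*k := by exact_mod_cast key
    push_cast at keyQ ⊢
    linear_combination (m:ℚ)*keyQ
  -- m does not divide r*t
  have hndvd : ¬ ((m:ℤ) ∣ (r:ℤ)*t) := by
    rintro ⟨w, hw⟩
    have hcancel : (u:ℤ)*t = (m':ℤ)*w := by
      have : (d:ℤ) * ((u:ℤ)*t) = (d:ℤ) * ((m':ℤ)*w) := by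
        rw [hmz, hrz] at hw; linarith [hw]
      exact mul_left_cancel₀ (by positivity) this
    have hco : IsCoprime ((m':ℤ)) t := ⟨-(ℏ*h), k', by linear_combination -ht⟩
    have hdvdu : (m':ℤ) ∣ (u:ℤ) := hco.dvd_of_dvd_mul_right ⟨w, hcancel⟩
    have : (m':ℤ) ≤ (u:ℤ) := Int.le_of_dvd (by exact_mod_cast hu1) hdvdu
    have : m' ≤ u := by exact_mod_cast this
    omega
  set N : ℤ := (r:ℤ)*t with hN
  set c : ℤ := N % (m:ℤ) with hc
  have hmZ : (0:ℤ) < m := by exact_mod_cast hm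
  have hc0 : 0 ≤ c := Int.emod_nonneg N (by omega)
  have hcm : c < m := Int.emod_lt_of_pos N hmZ
  have hcne : c ≠ 0 := by
    intro h0
    exact hndvd (Int.dvd_of_emod_eq_zero h0)
  have hNdecomp : N = (m:ℤ) * (N / m) + c := (Int.mul_ediv_add_emod N m).symm
  set z : ℤ := N / (m:ℤ) with hz
  have hm2 : 2 ≤ m := by omega
  have hmR : (0:ℝ) < m := by exact_mod_cast hm
  have hmC : (m:ℂ) ≠ 0 := by
    simpa using (show ((m:ℕ):ℂ) ≠ 0 from Nat.cast_ne_zero.mpr (by omega))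
  have hexpEq : Complex.exp (2 * (Real.pi : ℂ) * Complex.I * (ς : ℂ)) =
      Complex.exp (((2*Real.pi*((c:ℝ)/m) : ℝ):ℂ) * Complex.I) := by
    have hςC : (ς:ℂ) = (z:ℂ) + (c:ℂ)/(m:ℂ) := by
      have hq : ς = (z:ℚ) + (c:ℚ)/(m:ℚ) := by
        rw [hςv,
          show ((N:ℤ):ℚ) = ((m:ℤ)*z + c : ℤ) from by exact_mod_cast congrArg (fun x:ℤ => (x:ℚ)) hNdecomp]
        push_cast
        field_simp
      rw [hq]; push_cast; ring
    rw [hςC, mul_add, Complex.exp_add]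
    have h1 : Complex.exp (2 * (Real.pi : ℂ) * Complex.I * (z:ℂ)) = 1 := by
      rw [show 2 * (Real.pi : ℂ) * Complex.I * (z:ℂ) = (z:ℂ) * (2 * Real.pi * Complex.I) by ring]
      exact Complex.exp_int_mul_two_pi_mul_I z
    rw [h1, one_mul]
    congr 1
    push_cast
    field_simp
  have hbase : Complex.exp (2 * (Real.pi : ℂ) * Complex.I / (m : ℂ)) =
      Complex.exp (((2*Real.pi/(m:ℝ) : ℝ):ℂ) * Complex.I) := by
    congr 1
    push_cast
    field_simp
  refine ⟨?_, ?_, ?_⟩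
  · rintro ⟨w, hwq⟩
    rw [hςv] at hwq
    have h1 : ((N:ℚ)) = w * m := by
      field_simp at hwq; rw [mul_comm]; exact_mod_cast hwq
    have h2 : N = w * m := by exact_mod_cast h1
    exact hndvd ⟨w, by linarith⟩
  · rw [hexpEq, abs_one_sub_exp', hbase, abs_one_sub_exp']
    apply Real.sqrt_le_sqrt
    have hcos := cos_bound' (m:ℝ) ((c:ℝ)/m) (by exact_mod_cast hm2)
      (by
        rw [div_le_div_iff₀ hmR hmR]
        have h1c' : (1:ℤ) ≤ c := by omega
        have h1c : (1:ℝ) ≤ c := by exact_mod_cast h1c'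
        nlinarith)
      (by
        have hcle : (c:ℝ) ≤ (m:ℝ) - 1 := by
          have : c ≤ (m:ℤ) - 1 := by omega
          exact_mod_cast this
        have hinv : (1/(m:ℝ))*(m:ℝ) = 1 := by field_simp
        rw [div_le_iff₀ hmR]; nlinarith [hinv])
    linarith [hcos]
  · rw [hexpEq, abs_one_sub_exp']
    have h1 : Real.sqrt (2 - 2*Real.cos (2*Real.pi*((c:ℝ)/m))) ≤ Real.sqrt 4 := by
      apply Real.sqrt_le_sqrt
      nlinarith [Real.neg_one_le_cos (2*Real.pi*((c:ℝ)/m))]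
    have h2 : Real.sqrt 4 = 2 := by
      rw [show (4:ℝ) = 2^2 by norm_num, Real.sqrt_sq (by norm_num)]
    linarith
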